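/- The tensor product of wirings is well-defined on renaming classes and satisfies functoriality with respect to the product: for flows f, f', g, g' with the relevant products defined, (f ⊗ g)(f' ⊗ g') = (ff') ⊗ (gg') whenever both sides are defined. -/

import Mathlib

/-- First-order terms over natural-number symbols: variables and applications. -/
inductive Tm : Type
  | var : ℕ → Tm
  | app : ℕ → List Tm → Tm

namespace Tm

/-- Apply a substitution (map from variables to terms) homomorphically. -/
def subst (σ : ℕ → Tm) : Tm → Tm
  | var x => σ x
  | app f ts => app f (ts.attach.map fun ⟨t, _⟩ => subst σ t)

/-- List of variables occurring in a term. -/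
def varsL : Tm → List ℕ
  | var x => [x]
  | app _ ts => ts.attach.flatMap fun ⟨t, _⟩ => varsL t

/-- Height of a term: maximal distance from the root to a subterm. -/
def height : Tm → ℕ
  | var _ => 0
  | app _ ts => (ts.attach.map fun ⟨t, _⟩ => height t + 1).foldr max 0

/-- Heights of the occurrences of the variable `x` in a term. -/
def occs (x : ℕ) : Tm → List ℕ
  | var y => if y = x then [0] else []
  | app _ ts => ts.attach.flatMap fun ⟨t, _⟩ => (occs x t).map (· + 1)

/-- Symbols occurring in a term, together with the arity they are used with. -/
def symar : Tm → List (ℕ × ℕ)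
  | var _ => []
  | app f ts => (f, ts.length) :: ts.attach.flatMap fun ⟨t, _⟩ => symar t

end Tm

open Tm

/-- Set of variables of a term. -/
def tvars (t : Tm) : Set ℕ := {x | x ∈ t.varsL}

/-- A term is closed when it has no variables. -/
def Closed (t : Tm) : Prop := t.varsL = []

/-- A substitution is finitary when it is the identity on all but finitely many variables. -/
def Finitary (σ : ℕ → Tm) : Prop := {x | σ x ≠ .var x}.Finite

/-- `σ` unifies `t` and `u`. -/
def Unifies (σ : ℕ → Tm) (t u : Tm) : Prop := subst σ t = subst σ u

/-- `θ` is a most general unifier of `t` and `u`: a (finitary) unifier such that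
any other finitary unifier factors as an instance of it. -/
def IsMGU (θ : ℕ → Tm) (t u : Tm) : Prop :=
  Finitary θ ∧ Unifies θ t u ∧
    ∀ σ, Finitary σ → Unifies σ t u → ∃ ρ, Finitary ρ ∧ ∀ x, σ x = subst ρ (θ x)

/-- Renaming of a term along a bijection of variables. -/
def rename (π : ℕ ≃ ℕ) (t : Tm) : Tm := subst (fun x => .var (π x)) t

/-- A flow is (the data of) a pair of terms `head ⊸ body`. -/
abbrev UFlow := Tm × Tm

/-- The flow condition: the variables of the head occur in the body. -/
def IsFlow (f : UFlow) : Prop := tvars f.1 ⊆ tvars f.2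

/-- Equality of flows up to (simultaneous, bijective) renaming of variables. -/
def FlowEquiv (f g : UFlow) : Prop :=
  ∃ π : ℕ ≃ ℕ, rename π f.1 = g.1 ∧ rename π f.2 = g.2

/-- Variables of a flow. -/
def flowVars (f : UFlow) : Set ℕ := tvars f.1 ∪ tvars f.2

/-- `h` is a product of the flows `f = u ⊸ v` and `g = t ⊸ w`: choosing representatives
with disjoint variables, `h = uθ ⊸ wθ` for `θ` a most general unifier of `v` and `t`. -/
def IsProd (f g h : UFlow) : Prop :=
  ∃ f' g' θ, FlowEquiv f f' ∧ FlowEquiv g g' ∧ flowVars f' ∩ flowVars g' = ∅ ∧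
    IsMGU θ f'.2 g'.1 ∧ h = (subst θ f'.1, subst θ g'.2)

/-- A wiring: a set of flows (finite sets of flows are considered up to renaming,
so we model them as sets of representatives). -/
abbrev Wiring := Set UFlow

/-- Product of wirings: pointwise product of flows, where defined. -/
def wmul (F G : Wiring) : Wiring := {h | ∃ f ∈ F, ∃ g ∈ G, IsProd f g h}

/-- The unit wiring `I = x ⊸ x`. -/
def wI : Wiring := {f | FlowEquiv (.var 0, .var 0) f}

/-- Powers of a wiring. -/
def wpow (F : Wiring) : ℕ → Wiring
  | 0 => wI
  | n + 1 => wmul F (wpow F n)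

/-- Equality of wirings up to renaming of each flow. -/
def WEq (F G : Wiring) : Prop :=
  (∀ f ∈ F, ∃ g ∈ G, FlowEquiv f g) ∧ ∀ g ∈ G, ∃ f ∈ F, FlowEquiv f g

/-- A fact: a flow of the form `t ⊸ t` with `t` closed. -/
def IsFact (f : UFlow) : Prop := Closed f.1 ∧ f.2 = f.1

/-- Application of a wiring to (the fact associated with) a closed term:
the set of product flows. -/
def appF (F : Wiring) (t : Tm) : Set UFlow := {h | ∃ f ∈ F, IsProd f (t, t) h}

/-- Application of a wiring to a fact, keeping the facts produced. -/
def factApp (F : Wiring) (t : Tm) : Set Tm := {v | ∃ f ∈ F, IsProd f (t, t) (v, v)}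

/-- A wiring is deterministic if it produces at most one fact from any fact. -/
def Deterministic (F : Wiring) : Prop := ∀ t, Closed t → (appF F t).Subsingleton

/-- Two terms are matchable if renamings of them with disjoint variables are unifiable. -/
def Matchable (t u : Tm) : Prop :=
  ∃ (π π' : ℕ ≃ ℕ), tvars (rename π t) ∩ tvars (rename π' u) = ∅ ∧
    ∃ θ, Finitary θ ∧ Unifies θ (rename π t) (rename π' u)

/-- A flow is balanced if each variable has all its occurrences at the same height. -/
def BalancedF (f : UFlow) : Prop :=
  ∀ x, ∀ n ∈ occs x f.1 ++ occs x f.2, ∀ m ∈ occs x f.1 ++ occs x f.2, n = m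

/-- Height of a flow. -/
def heightF (f : UFlow) : ℕ := max f.1.height f.2.height

/-- A wiring is balanced if all its flows are. -/
def BalancedW (F : Wiring) : Prop := ∀ f ∈ F, BalancedF f

/-- Height of a wiring: maximal height of its flows. -/
noncomputable def heightW (F : Wiring) : ℕ := sSup (heightF '' F)

/-- The computation space of a wiring `F`: closed terms (identified with the
corresponding facts) of height at most `heightW F` built using only symbols
(with their arities) occurring in `F` and the constant `⋆` (symbol `0`). -/
noncomputable def compSpace (F : Wiring) : Set Tm :=
  {t | Closed t ∧ t.height ≤ heightW F ∧
    ∀ q ∈ t.symar, q = (0, 0) ∨ ∃ f ∈ F, q ∈ f.1.symar ++ f.2.symar}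

/-- Nilpotency of a wiring: some power is the empty wiring. -/
def Nilpotent (F : Wiring) : Prop := ∃ n, 0 < n ∧ wpow F n = ∅

/-- Edges of the computation graph of `F`: from `u` to `v` iff `v ∈ F u`. -/
noncomputable def Edge (F : Wiring) (u v : Tm) : Prop :=
  u ∈ compSpace F ∧ v ∈ compSpace F ∧ v ∈ factApp F u

/-- Acyclicity of the computation graph of `F`. -/
noncomputable def AcyclicCG (F : Wiring) : Prop :=
  ¬ ∃ n, 0 < n ∧ ∃ c : ℕ → Tm, (∀ i < n, Edge F (c i) (c (i + 1))) ∧ c n = c 0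

/-- The binary function symbol `•` used for tensor products (symbol `1`). -/
def bu (a b : Tm) : Tm := .app 1 [a, b]

/-- `h` is a tensor product of the flows `f = u ⊸ v` and `g = t ⊸ w`: choosing
representatives with disjoint variables, `h = (u • t) ⊸ (v • w)`. -/
def IsTensor (f g h : UFlow) : Prop :=
  ∃ f' g', FlowEquiv f f' ∧ FlowEquiv g g' ∧ flowVars f' ∩ flowVars g' = ∅ ∧
    h = (bu f'.1 g'.1, bu f'.2 g'.2)

-- ===== auxiliary development =====
theorem tm_ind {P : Tm → Prop} (hv : ∀ x, P (.var x))
    (ha : ∀ f ts, (∀ t ∈ ts, P t) → P (.app f ts)) : ∀ t, P t := by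
  intro t
  induction t using Tm.rec (motive_2 := fun ts => ∀ t ∈ ts, P t) with
  | var x => exact hv x
  | app f ts ih => exact ha f ts ih
  | nil => rename_i u hu; exact absurd hu (by simp)
  | cons h t ih1 ih2 => rename_i u hu; simp only [List.mem_cons] at hu; rcases hu with rfl | hu; exact ih1; exact ih2 _ hu

@[simp] theorem subst_var (σ : ℕ → Tm) (x : ℕ) : subst σ (.var x) = σ x := by rw [subst]
@[simp] theorem subst_app (σ : ℕ → Tm) (f : ℕ) (ts : List Tm) :
    subst σ (.app f ts) = .app f (ts.map (subst σ)) := by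
  rw [subst]; simp [List.attach_map_val]
@[simp] theorem varsL_var (x : ℕ) : varsL (.var x) = [x] := by rw [varsL]
@[simp] theorem varsL_app (f : ℕ) (ts : List Tm) :
    varsL (.app f ts) = ts.flatMap varsL := by
  rw [varsL]; simp only [List.flatMap_def, List.attach_map_val]

theorem subst_id (t : Tm) : subst .var t = t := by
  induction t using tm_ind with
  | hv x => simp
  | ha f ts ih => simp only [subst_app, Tm.app.injEq, true_and]
                  exact (List.map_congr_left ih).trans (List.map_id _)

theorem subst_subst (σ τ : ℕ → Tm) (t : Tm) :
    subst τ (subst σ t) = subst (fun x => subst τ (σ x)) t := by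
  induction t using tm_ind with
  | hv x => simp
  | ha f ts ih => simp only [subst_app, List.map_map, Tm.app.injEq, true_and]
                  exact List.map_congr_left fun t ht => ih t ht

theorem subst_congr {σ τ : ℕ → Tm} {t : Tm} (h : ∀ x ∈ varsL t, σ x = τ x) :
    subst σ t = subst τ t := by
  induction t using tm_ind with
  | hv x => simpa using h x (by simp)
  | ha f ts ih =>
    simp only [subst_app, Tm.app.injEq, true_and]
    refine List.map_congr_left fun u hu => ih u hu fun x hx => h x ?_
    simp only [varsL_app, List.mem_flatMap]; exact ⟨u, hu, hx⟩

theorem mem_varsL_subst {σ : ℕ → Tm} {t : Tm} {y : ℕ} :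
    y ∈ varsL (subst σ t) ↔ ∃ x ∈ varsL t, y ∈ varsL (σ x) := by
  induction t using tm_ind with
  | hv x => simp
  | ha f ts ih =>
    simp only [subst_app, varsL_app, List.mem_flatMap, List.mem_map]
    constructor
    · rintro ⟨u, ⟨v, hv, rfl⟩, hy⟩
      rcases (ih v hv).1 hy with ⟨x, hx, hyx⟩
      exact ⟨x, ⟨v, hv, hx⟩, hyx⟩
    · rintro ⟨x, ⟨v, hv, hx⟩, hyx⟩
      exact ⟨subst σ v, ⟨v, hv, rfl⟩, (ih v hv).2 ⟨x, hx, hyx⟩⟩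

theorem subst_eq_self {σ : ℕ → Tm} {t : Tm} (h : subst σ t = t) :
    ∀ y ∈ varsL t, σ y = .var y := by
  induction t using tm_ind with
  | hv x => intro y hy; simp at hy h; rwa [hy]
  | ha f ts ih =>
    intro y hy
    simp only [varsL_app, List.mem_flatMap] at hy
    rcases hy with ⟨u, hu, hyu⟩
    simp only [subst_app, Tm.app.injEq, true_and] at h
    have hmap : ∀ v ∈ ts, subst σ v = v := by
      clear ih hyu hu
      induction ts with
      | nil => simp
      | cons a l ihl =>
        simp only [List.map_cons, List.cons.injEq] at h
        intro v hv; simp only [List.mem_cons] at hv; rcases hv with rfl | hv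
        · exact h.1
        · exact ihl h.2 v hv
    exact ih u hu (hmap u hu) y hyu

-- ===== layer 2: rename and permutation lemmas =====

theorem rename_def (π : ℕ ≃ ℕ) (t : Tm) : rename π t = subst (fun x => .var (π x)) t := rfl

theorem rename_rename (π π' : ℕ ≃ ℕ) (t : Tm) :
    rename π' (rename π t) = rename (π.trans π') t := by
  simp [rename_def, subst_subst]

theorem rename_id (t : Tm) : rename (Equiv.refl ℕ) t = t := subst_id t

theorem mem_varsL_rename {π : ℕ ≃ ℕ} {t : Tm} {y : ℕ} :
    y ∈ varsL (rename π t) ↔ π.symm y ∈ varsL t := by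
  rw [rename_def, mem_varsL_subst]
  constructor
  · rintro ⟨x, hx, hy⟩; simp at hy; subst hy; simpa using hx
  · intro h; exact ⟨π.symm y, h, by simp⟩

theorem tvars_rename (π : ℕ ≃ ℕ) (t : Tm) : tvars (rename π t) = π '' tvars t := by
  ext y
  simp only [tvars, Set.mem_setOf_eq, mem_varsL_rename, Set.mem_image]
  constructor
  · intro h; exact ⟨π.symm y, h, by simp⟩
  · rintro ⟨x, hx, rfl⟩; simpa using hx

theorem tvars_finite (t : Tm) : (tvars t).Finite := Set.Finite.subset (t.varsL.toFinset.finite_toSet) (fun x hx => by simpa [tvars] using hx)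

theorem flowVars_finite (f : UFlow) : (flowVars f).Finite := ((tvars_finite f.1).union (tvars_finite f.2))

theorem rename_congr {π π' : ℕ ≃ ℕ} {t : Tm} (h : ∀ x ∈ varsL t, π x = π' x) :
    rename π t = rename π' t := subst_congr fun x hx => by rw [h x hx]

/-- supp of a substitution -/
def supp (σ : ℕ → Tm) : Set ℕ := {x | σ x ≠ .var x}

/-- Extension lemma: an injective-on-K map extends to a finitary permutation with
support inside K ∪ h '' K. -/
theorem exists_perm_ext (K : Finset ℕ) (h : ℕ → ℕ) (hinj : Set.InjOn h K) :
    ∃ π : ℕ ≃ ℕ, {x | π x ≠ x}.Finite ∧ (∀ x ∈ K, π x = h x) ∧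
      (∀ x, π x ≠ x → x ∈ (K : Set ℕ) ∪ h '' K) := by
  classical
  induction K using Finset.induction with
  | empty => exact ⟨Equiv.refl ℕ, by simp, by simp, by simp⟩
  | @insert a K ha ih =>
    obtain ⟨π', hfin, hagree, hsupp⟩ := ih (hinj.mono (by intro x hx; simp at hx ⊢; exact Or.inr hx))
    have hKsub : (K : Set ℕ) ∪ h '' K ⊆ ((insert a K : Finset ℕ) : Set ℕ) ∪ h '' (insert a K : Finset ℕ) := by
      rintro x (hx | ⟨y, hy, rfl⟩)
      · exact Or.inl (by simp [hx])
      · exact Or.inr ⟨y, by simp [hy], rfl⟩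
    set b := π'.symm (h a) with hb
    refine ⟨(Equiv.swap a b).trans π', ?_, ?_, ?_⟩
    · apply Set.Finite.subset (hfin.union ((Set.finite_singleton a).union (Set.finite_singleton b)))
      intro x hx
      simp only [Set.mem_setOf_eq, Equiv.trans_apply] at hx
      by_cases hxa : x = a
      · right; simp [hxa]
      by_cases hxb : x = b
      · right; simp [hxb]
      · left; simpa [Equiv.swap_apply_of_ne_of_ne hxa hxb] using hx
    · intro x hx
      simp only [Finset.mem_insert] at hx
      rcases hx with rfl | hx
      · simp [Equiv.trans_apply, Equiv.swap_apply_left, hb]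
      · have hxa : x ≠ a := fun e => ha (e ▸ hx)
        have hxb : x ≠ b := by
          intro e
          have h1 : π' x = h a := by rw [e, hb]; simp
          have h2 : h x = h a := by rw [← hagree x hx, h1]
          exact hxa (hinj (by simp [hx]) (by simp) h2)
        simp [Equiv.trans_apply, Equiv.swap_apply_of_ne_of_ne hxa hxb, hagree x hx]
    · intro x hx
      simp only [Equiv.trans_apply] at hx
      by_cases hxa : x = a
      · exact Or.inl (by simp [hxa])
      by_cases hxb : x = b
      · by_cases hba : x = h a
        · exact Or.inr ⟨a, by simp, hba.symm⟩
        · have hmv : π' x ≠ x := by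
            intro e
            apply hba
            rw [← e, hxb, hb]
            simp
          exact hKsub (hsupp x hmv)
      · rw [Equiv.swap_apply_of_ne_of_ne hxa hxb] at hx
        exact hKsub (hsupp x hx)

-- ===== layer 3 =====

theorem flowEquiv_refl (f : UFlow) : FlowEquiv f f :=
  ⟨Equiv.refl ℕ, rename_id _, rename_id _⟩

theorem flowEquiv_symm {f g : UFlow} (h : FlowEquiv f g) : FlowEquiv g f := by
  obtain ⟨π, h1, h2⟩ := h
  refine ⟨π.symm, ?_, ?_⟩
  · rw [← h1, rename_rename]; simp [rename_id]
  · rw [← h2, rename_rename]; simp [rename_id]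

theorem flowEquiv_trans {f g h : UFlow} (h1 : FlowEquiv f g) (h2 : FlowEquiv g h) :
    FlowEquiv f h := by
  obtain ⟨π, ha, hb⟩ := h1
  obtain ⟨π', hc, hd⟩ := h2
  exact ⟨π.trans π', by rw [← rename_rename, ha, hc], by rw [← rename_rename, hb, hd]⟩

/-- variables of a flow as a Finset -/
noncomputable def flowVarsL (f : UFlow) : Finset ℕ := (varsL f.1 ++ varsL f.2).toFinset

theorem mem_flowVarsL {f : UFlow} {x : ℕ} : x ∈ flowVarsL f ↔ x ∈ flowVars f := by
  simp [flowVarsL, flowVars, tvars, Set.mem_union]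

theorem mem_flowVars_of_head {f : UFlow} {x : ℕ} (h : x ∈ varsL f.1) : x ∈ flowVars f :=
  Or.inl h
theorem mem_flowVars_of_body {f : UFlow} {x : ℕ} (h : x ∈ varsL f.2) : x ∈ flowVars f :=
  Or.inr h

theorem rename_mem_flowVars {π : ℕ ≃ ℕ} {f g : UFlow}
    (h1 : rename π f.1 = g.1) (h2 : rename π f.2 = g.2) {x : ℕ} (hx : x ∈ flowVars f) :
    π x ∈ flowVars g := by
  rcases hx with hx | hx
  · exact Or.inl (by rw [← h1, rename_def]; exact mem_varsL_subst.2 ⟨x, hx, by simp⟩)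
  · exact Or.inr (by rw [← h2, rename_def]; exact mem_varsL_subst.2 ⟨x, hx, by simp⟩)

/-- Joint renaming: two variable-disjoint flows equivalent to two variable-disjoint flows
can be renamed simultaneously by one finitary permutation. -/
theorem joint_rename {A B A' B' : UFlow} (hAB : flowVars A ∩ flowVars B = ∅)
    (hAB' : flowVars A' ∩ flowVars B' = ∅) (hA : FlowEquiv A A') (hB : FlowEquiv B B') :
    ∃ π : ℕ ≃ ℕ, {x | π x ≠ x}.Finite ∧
      rename π A.1 = A'.1 ∧ rename π A.2 = A'.2 ∧ rename π B.1 = B'.1 ∧ rename π B.2 = B'.2 := by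
  classical
  obtain ⟨π₁, hA1, hA2⟩ := hA
  obtain ⟨π₂, hB1, hB2⟩ := hB
  set h : ℕ → ℕ := fun x => if x ∈ flowVars A then π₁ x else π₂ x with hh
  have hinj : Set.InjOn h ((flowVarsL A ∪ flowVarsL B : Finset ℕ) : Set ℕ) := by
    intro x hx y hy hxy
    simp only [Finset.coe_union, Set.mem_union, Finset.mem_coe, mem_flowVarsL] at hx hy
    have hx' : x ∈ flowVars A ∨ x ∈ flowVars B := hx
    have hy' : y ∈ flowVars A ∨ y ∈ flowVars B := hy
    rcases hx' with hxA | hxB <;> rcases hy' with hyA | hyB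
    · rw [hh] at hxy; simp only [if_pos hxA, if_pos hyA] at hxy; exact π₁.injective hxy
    · have hyA : y ∉ flowVars A := fun hyA => Set.eq_empty_iff_forall_notMem.1 hAB y ⟨hyA, hyB⟩
      rw [hh] at hxy; simp only [if_pos hxA, if_neg hyA] at hxy
      exfalso
      have h1 : π₁ x ∈ flowVars A' := rename_mem_flowVars hA1 hA2 hxA
      have h2 : π₂ y ∈ flowVars B' := rename_mem_flowVars hB1 hB2 hyB
      rw [hxy] at h1
      exact Set.eq_empty_iff_forall_notMem.1 hAB' _ ⟨h1, h2⟩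
    · have hxA' : x ∉ flowVars A := fun hxA => Set.eq_empty_iff_forall_notMem.1 hAB x ⟨hxA, hxB⟩
      rw [hh] at hxy; simp only [if_neg hxA', if_pos hyA] at hxy
      exfalso
      have h1 : π₁ y ∈ flowVars A' := rename_mem_flowVars hA1 hA2 hyA
      have h2 : π₂ x ∈ flowVars B' := rename_mem_flowVars hB1 hB2 hxB
      rw [← hxy] at h1
      exact Set.eq_empty_iff_forall_notMem.1 hAB' _ ⟨h1, h2⟩
    · have hxA' : x ∉ flowVars A := fun hxA => Set.eq_empty_iff_forall_notMem.1 hAB x ⟨hxA, hxB⟩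
      have hyA' : y ∉ flowVars A := fun hyA => Set.eq_empty_iff_forall_notMem.1 hAB y ⟨hyA, hyB⟩
      rw [hh] at hxy; simp only [if_neg hxA', if_neg hyA'] at hxy; exact π₂.injective hxy
  obtain ⟨π, hfin, hagree, -⟩ := exists_perm_ext _ h hinj
  have hagreeA : ∀ x ∈ flowVars A, π x = π₁ x := by
    intro x hx
    rw [hagree x (by simp [mem_flowVarsL]; exact Or.inl hx)]
    rw [hh]; simp [if_pos hx]
  have hagreeB : ∀ x ∈ flowVars B, π x = π₂ x := by
    intro x hx
    have hxA : x ∉ flowVars A := fun hxA => Set.eq_empty_iff_forall_notMem.1 hAB x ⟨hxA, hx⟩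
    rw [hagree x (by simp [mem_flowVarsL]; exact Or.inr hx)]
    rw [hh]; simp [if_neg hxA]
  refine ⟨π, hfin, ?_, ?_, ?_, ?_⟩
  · rw [← hA1]; exact rename_congr fun x hx => hagreeA x (mem_flowVars_of_head hx)
  · rw [← hA2]; exact rename_congr fun x hx => hagreeA x (mem_flowVars_of_body hx)
  · rw [← hB1]; exact rename_congr fun x hx => hagreeB x (mem_flowVars_of_head hx)
  · rw [← hB2]; exact rename_congr fun x hx => hagreeB x (mem_flowVars_of_body hx)

-- ===== layer 4: MGU transport and uniqueness =====

theorem finitary_comp {σ τ : ℕ → Tm} (hσ : Finitary σ) (hτ : Finitary τ) :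
    Finitary (fun x => subst τ (σ x)) := by
  apply Set.Finite.subset (hσ.union hτ)
  intro x hx
  simp only [Set.mem_setOf_eq, Set.mem_union] at hx ⊢
  by_cases h : σ x = .var x
  · right; intro hτx; apply hx; rw [h, subst_var, hτx]
  · left; exact h

theorem finitary_perm_comp {θ : ℕ → Tm} {π : ℕ ≃ ℕ} (hθ : Finitary θ)
    (hπ : {x | π x ≠ x}.Finite) : Finitary (fun x => θ (π x)) := by
  apply Set.Finite.subset ((hθ.image π.symm).union hπ)
  intro x hx
  simp only [Set.mem_setOf_eq, Set.mem_union, Set.mem_image] at hx ⊢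
  by_cases h : θ (π x) = .var (π x)
  · right; intro e; apply hx; rw [h, e]
  · left; exact ⟨π x, h, by simp⟩

theorem subst_rename (π : ℕ ≃ ℕ) (σ : ℕ → Tm) (t : Tm) :
    subst σ (rename π t) = subst (fun x => σ (π x)) t := by
  rw [rename_def, subst_subst]
  exact subst_congr fun x _ => by simp

theorem rename_subst (π : ℕ ≃ ℕ) (σ : ℕ → Tm) (t : Tm) :
    rename π (subst σ t) = subst (fun x => rename π (σ x)) t := by
  rw [rename_def, subst_subst]; rfl

/-- Transport of mgus along finitary permutations. -/
theorem isMGU_rename {θ : ℕ → Tm} {s t : Tm} (h : IsMGU θ s t) {π : ℕ ≃ ℕ}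
    (hπ : {x | π x ≠ x}.Finite) :
    IsMGU (fun x => θ (π.symm x)) (rename π s) (rename π t) := by
  obtain ⟨hfin, huni, hfac⟩ := h
  have hπs : {x | π.symm x ≠ x}.Finite := by
    apply Set.Finite.subset (hπ.image π)
    intro x hx
    simp only [Set.mem_setOf_eq, Set.mem_image] at hx ⊢
    exact ⟨π.symm x, fun e => hx (e.symm.trans (π.apply_symm_apply x)), by simp⟩
  refine ⟨finitary_perm_comp hfin hπs, ?_, ?_⟩
  · unfold Unifies
    rw [subst_rename, subst_rename]
    have : ∀ u, subst (fun x => θ (π.symm (π x))) u = subst θ u := fun u =>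
      subst_congr fun x _ => by simp
    rw [this, this]; exact huni
  · intro σ hσ huσ
    have hσ' : Finitary (fun x => σ (π x)) := finitary_perm_comp hσ hπ
    have huσ' : Unifies (fun x => σ (π x)) s t := by
      unfold Unifies at huσ ⊢
      rw [subst_rename, subst_rename] at huσ; exact huσ
    obtain ⟨ρ, hρ, hfac'⟩ := hfac _ hσ' huσ'
    refine ⟨ρ, hρ, fun x => ?_⟩
    have := hfac' (π.symm x)
    simpa using this

/-- Post-composition of an mgu with a finitary permutation is an mgu. -/
theorem isMGU_perm_comp {θ : ℕ → Tm} {s t : Tm} (h : IsMGU θ s t) {π : ℕ ≃ ℕ}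
    (hπ : {x | π x ≠ x}.Finite) : IsMGU (fun x => rename π (θ x)) s t := by
  obtain ⟨hfin, huni, hfac⟩ := h
  have key : ∀ u, subst (fun x => rename π (θ x)) u = rename π (subst θ u) := fun u => by
    rw [rename_subst]
  have hπvar : Finitary (fun x => Tm.var (π x)) := by
    apply Set.Finite.subset hπ
    intro x hx
    simp only [Set.mem_setOf_eq] at hx ⊢
    intro e; exact hx (by rw [e])
  refine ⟨?_, ?_, ?_⟩
  · have := finitary_comp hfin hπvar
    apply Set.Finite.subset this
    intro x hx
    simp only [Set.mem_setOf_eq] at hx ⊢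
    intro e; exact hx ((rename_def π (θ x)).trans e)
  · unfold Unifies
    rw [key, key, huni]
  · intro σ hσ huσ
    obtain ⟨ρ, hρ, hfac'⟩ := hfac _ hσ huσ
    refine ⟨fun y => ρ (π.symm y), ?_, fun x => ?_⟩
    · have hπs : {x | π.symm x ≠ x}.Finite := by
        apply Set.Finite.subset (hπ.image π)
        intro x hx
        simp only [Set.mem_setOf_eq, Set.mem_image] at hx ⊢
        exact ⟨π.symm x, fun e => hx (e.symm.trans (π.apply_symm_apply x)), by simp⟩
      exact finitary_perm_comp hρ hπs
    · rw [hfac' x]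
      show _ = subst (fun y => ρ (π.symm y)) (rename π (θ x))
      rw [subst_rename]
      exact (subst_congr fun y _ => by simp).symm

theorem finperm_symm {π : ℕ ≃ ℕ} (hπ : {x | π x ≠ x}.Finite) : {x | π.symm x ≠ x}.Finite := by
  apply Set.Finite.subset (hπ.image π)
  intro x hx
  simp only [Set.mem_setOf_eq, Set.mem_image] at hx ⊢
  exact ⟨π.symm x, fun e => hx (e.symm.trans (π.apply_symm_apply x)), by simp⟩

theorem subst_is_var {ρ ρ' : ℕ → Tm} {y : ℕ} (h : subst ρ' (ρ y) = .var y) :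
    ∃ z, ρ y = .var z ∧ ρ' z = .var y := by
  cases hρy : ρ y with
  | var z => rw [hρy] at h; simp at h; exact ⟨z, rfl, h⟩
  | app f ts => rw [hρy] at h; simp at h

/-- Uniqueness of the product of flows, up to renaming. -/
theorem prod_unique {a b c c' : UFlow} (h1 : IsProd a b c) (h2 : IsProd a b c') :
    FlowEquiv c c' := by
  classical
  obtain ⟨A, B, θ, haA, hbB, hdisj, hmgu, hc⟩ := h1
  obtain ⟨A', B', θ', haA', hbB', hdisj', hmgu', hc'⟩ := h2
  obtain ⟨π, hπfin, hA1, hA2, hB1, hB2⟩ :=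
    joint_rename hdisj hdisj' (flowEquiv_trans (flowEquiv_symm haA) haA')
      (flowEquiv_trans (flowEquiv_symm hbB) hbB')
  -- transport θ' to an mgu of (A.2, B.1)
  have hmgu'' : IsMGU (fun x => θ' (π x)) A.2 B.1 := by
    have h0 := isMGU_rename hmgu' (finperm_symm hπfin)
    rw [← hA2, ← hB1, rename_rename, rename_rename] at h0
    simp only [Equiv.self_trans_symm, rename_id, Equiv.symm_symm] at h0
    exact h0
  set θ'' : ℕ → Tm := fun x => θ' (π x) with hθ''
  obtain ⟨ρ, hρfin, hfac1⟩ := hmgu.2.2 θ'' hmgu''.1 hmgu''.2.1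
  obtain ⟨ρ', hρ'fin, hfac2⟩ := hmgu''.2.2 θ hmgu.1 hmgu.2.1
  have key : ∀ x, ∀ y ∈ varsL (θ x), subst ρ' (ρ y) = .var y := by
    intro x
    have : subst (fun y => subst ρ' (ρ y)) (θ x) = θ x := by
      rw [← subst_subst]
      conv_lhs => rw [← hfac1 x]
      exact (hfac2 x).symm
    exact fun y hy => subst_eq_self this y hy
  -- c' = subst ρ c componentwise
  have hc1' : c'.1 = subst ρ c.1 := by
    rw [hc', hc]
    show subst θ' A'.1 = subst ρ (subst θ A.1)
    rw [← hA1, subst_rename, subst_subst]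
    exact subst_congr fun x _ => hfac1 x
  have hc2' : c'.2 = subst ρ c.2 := by
    rw [hc', hc]
    show subst θ' B'.2 = subst ρ (subst θ B.2)
    rw [← hB2, subst_rename, subst_subst]
    exact subst_congr fun x _ => hfac1 x
  -- on the variables of c, ρ is a variable renaming
  set hmap : ℕ → ℕ := fun y => if h : ∃ z, ρ y = .var z then h.choose else y with hhmap
  have hvar : ∀ y, (∃ x, y ∈ varsL (θ x)) → ρ y = .var (hmap y) ∧ ρ' (hmap y) = .var y := by
    intro y ⟨x, hyx⟩
    obtain ⟨z, hz1, hz2⟩ := subst_is_var (key x y hyx)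
    have hex : ∃ z, ρ y = .var z := ⟨z, hz1⟩
    have : hmap y = z := by
      rw [hhmap]; simp only [dif_pos hex]
      have h3 := hex.choose_spec
      have h4 : Tm.var hex.choose = Tm.var z := h3.symm.trans hz1
      injection h4
    rw [this]; exact ⟨hz1, hz2⟩
  have hKmem : ∀ y ∈ varsL c.1 ++ varsL c.2, ∃ x, y ∈ varsL (θ x) := by
    intro y hy
    rw [List.mem_append] at hy
    rcases hy with hy | hy
    · rw [hc] at hy; simp only at hy
      obtain ⟨x, _, hx2⟩ := mem_varsL_subst.1 hy
      exact ⟨x, hx2⟩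
    · rw [hc] at hy; simp only at hy
      obtain ⟨x, _, hx2⟩ := mem_varsL_subst.1 hy
      exact ⟨x, hx2⟩
  have hinj : Set.InjOn hmap ((varsL c.1 ++ varsL c.2).toFinset : Set ℕ) := by
    intro y1 hy1 y2 hy2 he
    simp only [Finset.coe_sort_coe, List.mem_toFinset, List.coe_toFinset, Set.mem_setOf_eq] at hy1 hy2
    have h1 := (hvar y1 (hKmem y1 hy1)).2
    have h2 := (hvar y2 (hKmem y2 hy2)).2
    rw [he] at h1
    rw [h1] at h2
    injection h2
  obtain ⟨π₀, _, hagree, -⟩ := exists_perm_ext _ hmap hinj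
  refine ⟨π₀, ?_, ?_⟩
  · rw [hc1', rename_def]
    exact subst_congr fun y hy => by
      rw [(hvar y (hKmem y (by simp [hy]))).1, hagree y (by simp [hy])]
  · rw [hc2', rename_def]
    exact subst_congr fun y hy => by
      rw [(hvar y (hKmem y (by simp [hy]))).1, hagree y (by simp [hy])]

theorem rename_bu (π : ℕ ≃ ℕ) (a b : Tm) : rename π (bu a b) = bu (rename π a) (rename π b) := by
  simp [bu, rename_def]

theorem subst_bu (σ : ℕ → Tm) (a b : Tm) : subst σ (bu a b) = bu (subst σ a) (subst σ b) := by
  simp [bu]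

/-- Part 1: the tensor is well-defined on renaming classes. -/
theorem tensor_unique {f f₂ g g₂ h h₂ : UFlow} (hf : FlowEquiv f f₂) (hg : FlowEquiv g g₂)
    (ht : IsTensor f g h) (ht₂ : IsTensor f₂ g₂ h₂) : FlowEquiv h h₂ := by
  obtain ⟨f', g', hff', hgg', hdisj, hh⟩ := ht
  obtain ⟨f₂', g₂', hff₂', hgg₂', hdisj₂, hh₂⟩ := ht₂
  obtain ⟨π, hπfin, h1, h2, h3, h4⟩ := joint_rename hdisj hdisj₂
    (flowEquiv_trans (flowEquiv_symm hff') (flowEquiv_trans hf hff₂'))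
    (flowEquiv_trans (flowEquiv_symm hgg') (flowEquiv_trans hg hgg₂'))
  refine ⟨π, ?_, ?_⟩
  · rw [hh, hh₂]; show rename π (bu f'.1 g'.1) = bu f₂'.1 g₂'.1
    rw [rename_bu, h1, h3]
  · rw [hh, hh₂]; show rename π (bu f'.2 g'.2) = bu f₂'.2 g₂'.2
    rw [rename_bu, h2, h4]

/-- Existence of a relevant mgu: identity outside the variables of the problem, and
introducing no outside variables. -/
theorem exists_relevant_mgu {θ : ℕ → Tm} {s t : Tm} (h : IsMGU θ s t) :
    ∃ θ', IsMGU θ' s t ∧ (∀ x, x ∉ tvars s ∪ tvars t → θ' x = .var x) ∧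
      (∀ x, x ∈ tvars s ∪ tvars t → ∀ y ∈ varsL (θ' x), y ∈ tvars s ∪ tvars t) := by
  classical
  set V : Set ℕ := tvars s ∪ tvars t with hV
  have hVs : ∀ x ∈ varsL s, x ∈ V := fun x hx => Or.inl hx
  have hVt : ∀ x ∈ varsL t, x ∈ V := fun x hx => Or.inr hx
  obtain ⟨hfin, huni, hfac⟩ := h
  -- the restriction of θ to V is a unifier
  set σ₀ : ℕ → Tm := fun x => if x ∈ V then θ x else .var x with hσ₀
  have hσ₀fin : Finitary σ₀ := by
    apply Set.Finite.subset hfin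
    intro x hx
    simp only [Set.mem_setOf_eq, hσ₀] at hx ⊢
    by_cases hxV : x ∈ V
    · rwa [if_pos hxV] at hx
    · rw [if_neg hxV] at hx; exact absurd rfl hx
  have hσ₀uni : Unifies σ₀ s t := by
    unfold Unifies
    rw [show subst σ₀ s = subst θ s from subst_congr fun x hx => by simp [hσ₀, if_pos (hVs x hx)],
        show subst σ₀ t = subst θ t from subst_congr fun x hx => by simp [hσ₀, if_pos (hVt x hx)]]
    exact huni
  obtain ⟨τ, hτfin, hτ⟩ := hfac σ₀ hσ₀fin hσ₀uni
  -- off V, θ is a variable map g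
  set g : ℕ → ℕ := fun x => if hx : ∃ z, θ x = .var z then hx.choose else x with hg
  have hgspec : ∀ x ∉ V, θ x = .var (g x) ∧ τ (g x) = .var x := by
    intro x hxV
    have h0 : subst τ (θ x) = .var x := by
      have := hτ x
      rw [hσ₀] at this; simp only [if_neg hxV] at this
      exact this.symm
    obtain ⟨z, hz1, hz2⟩ := subst_is_var h0
    have hex : ∃ z, θ x = .var z := ⟨z, hz1⟩
    have hgz : g x = z := by
      rw [hg]; simp only [dif_pos hex]
      have h4 : Tm.var hex.choose = Tm.var z := hex.choose_spec.symm.trans hz1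
      injection h4
    rw [hgz]; exact ⟨hz1, hz2⟩
  have hginj : ∀ x1 ∉ V, ∀ x2 ∉ V, g x1 = g x2 → x1 = x2 := by
    intro x1 h1 x2 h2 he
    have e1 := (hgspec x1 h1).2
    have e2 := (hgspec x2 h2).2
    rw [he, e2] at e1
    injection e1 with e
    exact e.symm
  have hgid : ∀ x, x ∉ V → θ x = .var x → g x = x := by
    intro x hxV hθx
    have := (hgspec x hxV).1
    rw [hθx] at this
    injection this.symm
  -- extend g off V to a permutation γ
  set K₀ : Finset ℕ := hfin.toFinset.filter (fun x => x ∉ V) with hK₀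
  have hK₀sub : ∀ x ∈ K₀, x ∉ V := by intro x hx; rw [hK₀] at hx; simp at hx; exact hx.2
  obtain ⟨γ, hγfin, hγagree, hγsupp⟩ := exists_perm_ext K₀ g
    (fun x hx y hy he => hginj x (hK₀sub x (by simpa using hx)) y (hK₀sub y (by simpa using hy)) he)
  have hγg : ∀ x ∉ V, γ x = g x := by
    intro x hxV
    by_cases hxK : x ∈ K₀
    · exact hγagree x hxK
    · have hθid : θ x = .var x := by
        by_contra hne
        apply hxK
        rw [hK₀, Finset.mem_filter]
        exact ⟨(Set.Finite.mem_toFinset hfin).2 hne, hxV⟩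
      rw [hgid x hxV hθid]
      by_contra hne
      rcases hγsupp x hne with hxK' | ⟨x₀, hx₀, hgx₀⟩
      · exact hxK (by simpa using hxK')
      · have hx₀K : x₀ ∈ K₀ := by simpa using hx₀
        have : x₀ = x := hginj x₀ (hK₀sub x₀ hx₀K) x hxV (by rw [hgx₀, hgid x hxV hθid])
        exact hxK (this ▸ hx₀K)
  -- the relevant mgu
  set θ₁ : ℕ → Tm := fun x => rename γ.symm (θ x) with hθ₁
  have hmgu1 : IsMGU θ₁ s t := isMGU_perm_comp ⟨hfin, huni, hfac⟩ (finperm_symm hγfin)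
  have hid : ∀ x, x ∉ V → θ₁ x = .var x := by
    intro x hxV
    rw [hθ₁]; simp only
    rw [(hgspec x hxV).1, rename_def, subst_var]
    rw [← hγg x hxV]
    simp
  refine ⟨θ₁, hmgu1, hid, ?_⟩
  -- relevance via freshness argument
  intro x hxV y hy
  by_contra hyV
  obtain ⟨hfin1, huni1, hfac1⟩ := hmgu1
  set B : Finset ℕ := (varsL s).toFinset ∪ (varsL t).toFinset ∪ hfin1.toFinset ∪
      hfin1.toFinset.biUnion (fun w => (varsL (θ₁ w)).toFinset) ∪ {y} with hB
  obtain ⟨z, hz⟩ := Infinite.exists_notMem_finset B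
  have hzy : z ≠ y := fun e => hz (by rw [hB, e]; simp)
  have hzV : z ∉ V := by
    rintro (hzs | hzt)
    · exact hz (by rw [hB]; simp [tvars] at hzs ⊢; tauto)
    · exact hz (by rw [hB]; simp [tvars] at hzt ⊢; tauto)
  set σ : ℕ → Tm := fun w => if w = y then .var z else θ₁ w with hσ
  have hσfin : Finitary σ := by
    apply Set.Finite.subset (hfin1.union (Set.finite_singleton y))
    intro w hw
    simp only [Set.mem_setOf_eq, Set.mem_union, Set.mem_singleton_iff, hσ] at hw ⊢
    by_cases hwy : w = y
    · right; exact hwy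
    · left; rwa [if_neg hwy] at hw
  have hyV : y ∉ V := hyV
  have hσuni : Unifies σ s t := by
    unfold Unifies
    rw [show subst σ s = subst θ₁ s from subst_congr fun w hw => by
          rw [hσ]; simp only [if_neg (show w ≠ y from fun e => hyV (e ▸ hVs w hw))],
        show subst σ t = subst θ₁ t from subst_congr fun w hw => by
          rw [hσ]; simp only [if_neg (show w ≠ y from fun e => hyV (e ▸ hVt w hw))]]
    exact huni1
  obtain ⟨τ', _, hfc⟩ := hfac1 σ hσfin hσuni
  have hτ'y : τ' y = .var z := by
    have := hfc y
    rw [hσ] at this; simp only [if_pos rfl] at this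
    rw [hid y hyV] at this
    simpa using this.symm
  have hxy : x ≠ y := fun e => hyV (e ▸ hxV)
  have hθ₁x : θ₁ x = subst τ' (θ₁ x) := by
    have := hfc x
    rw [hσ] at this; simp only [if_neg hxy] at this
    exact this
  have hzmem : z ∈ varsL (θ₁ x) := by
    rw [hθ₁x]
    exact mem_varsL_subst.2 ⟨y, hy, by rw [hτ'y]; simp⟩
  -- but z was chosen fresh
  by_cases hxsupp : θ₁ x = .var x
  · rw [hxsupp] at hzmem
    simp at hzmem
    exact hzV (hzmem ▸ hxV)
  · apply hz
    rw [hB]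
    have hxs : x ∈ hfin1.toFinset := (Set.Finite.mem_toFinset hfin1).2 hxsupp
    simp only [Finset.mem_union, Finset.mem_biUnion]
    left; right
    exact ⟨x, hxs, by simpa using hzmem⟩

/-- Rename a flow away from any finite set of variables. -/
theorem fresh_rename (f : UFlow) (S : Set ℕ) (hS : S.Finite) :
    ∃ f' : UFlow, FlowEquiv f f' ∧ flowVars f' ∩ S = ∅ := by
  classical
  set N : ℕ := hS.toFinset.sup id + 1 with hN
  have hinj : Set.InjOn (fun x => x + N) (flowVarsL f : Set ℕ) := fun x _ y _ h => by
    simpa using h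
  obtain ⟨π, -, hagree, -⟩ := exists_perm_ext (flowVarsL f) (fun x => x + N) hinj
  refine ⟨(rename π f.1, rename π f.2), ⟨π, rfl, rfl⟩, ?_⟩
  rw [Set.eq_empty_iff_forall_notMem]
  rintro x ⟨hx1, hx2⟩
  have hxS : x ≤ hS.toFinset.sup id := Finset.le_sup (f := id) (by simpa using hx2)
  have : ∃ w ∈ flowVars f, π w = x := by
    rcases hx1 with hx | hx
    · have := mem_varsL_rename.1 hx
      exact ⟨π.symm x, mem_flowVars_of_head this, by simp⟩
    · have := mem_varsL_rename.1 hx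
      exact ⟨π.symm x, mem_flowVars_of_body this, by simp⟩
  obtain ⟨w, hw, hwx⟩ := this
  have : π w = w + N := hagree w (mem_flowVarsL.2 hw)
  omega

theorem bu_inj {a b c d : Tm} (h : bu a b = bu c d) : a = c ∧ b = d := by
  simp only [bu, Tm.app.injEq, List.cons.injEq, and_true, true_and] at h
  exact h

/-- Combining relevant mgus on disjoint variable sets. -/
theorem combine_mgu {θ θ₁ θ₂ : ℕ → Tm} {v u' w t' : Tm} {V₁ V₂ : Set ℕ}
    (hd : V₁ ∩ V₂ = ∅)
    (hv : tvars v ⊆ V₁) (hu' : tvars u' ⊆ V₁) (hw : tvars w ⊆ V₂) (ht' : tvars t' ⊆ V₂)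
    (h1 : IsMGU θ₁ v u') (h2 : IsMGU θ₂ w t')
    (h1rel : ∀ x ∈ V₁, ∀ y ∈ varsL (θ₁ x), y ∈ V₁)
    (h2id : ∀ x ∉ V₂, θ₂ x = .var x) (h2rel : ∀ x ∈ V₂, ∀ y ∈ varsL (θ₂ x), y ∈ V₂)
    (hθ1 : ∀ x ∈ V₁, θ x = θ₁ x) (hθ2 : ∀ x ∉ V₁, θ x = θ₂ x) :
    IsMGU θ (bu v w) (bu u' t') := by
  classical
  have hdis : ∀ x, x ∈ V₁ → x ∈ V₂ → False := fun x h1 h2 =>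
    Set.eq_empty_iff_forall_notMem.1 hd x ⟨h1, h2⟩
  have hsub1 : ∀ {r : Tm}, tvars r ⊆ V₁ → subst θ r = subst θ₁ r := fun hr =>
    subst_congr fun x hx => hθ1 x (hr hx)
  have hsub2 : ∀ {r : Tm}, tvars r ⊆ V₂ → subst θ r = subst θ₂ r := fun hr =>
    subst_congr fun x hx => hθ2 x (fun hx1 => hdis x hx1 (hr hx))
  refine ⟨?_, ?_, ?_⟩
  · apply Set.Finite.subset (h1.1.union h2.1)
    intro x hx
    simp only [Set.mem_setOf_eq, Set.mem_union] at hx ⊢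
    by_cases hx1 : x ∈ V₁
    · left; rwa [hθ1 x hx1] at hx
    · right; rwa [hθ2 x hx1] at hx
  · unfold Unifies
    rw [subst_bu, subst_bu, hsub1 hv, hsub1 hu', hsub2 hw, hsub2 ht',
      h1.2.1, h2.2.1]
  · intro σ hσ huσ
    unfold Unifies at huσ
    rw [subst_bu, subst_bu] at huσ
    obtain ⟨e1, e2⟩ := bu_inj huσ
    obtain ⟨τ₁, hτ₁fin, hτ₁⟩ := h1.2.2 σ hσ e1
    obtain ⟨τ₂, hτ₂fin, hτ₂⟩ := h2.2.2 σ hσ e2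
    set τ : ℕ → Tm := fun y => if y ∈ V₁ then τ₁ y else τ₂ y with hτ
    have hτval1 : ∀ y ∈ V₁, τ y = τ₁ y := fun y hy => by rw [hτ]; simp [if_pos hy]
    have hτval2 : ∀ y, y ∉ V₁ → τ y = τ₂ y := fun y hy => by rw [hτ]; simp [if_neg hy]
    have hτfin : Finitary τ := by
      apply Set.Finite.subset (hτ₁fin.union hτ₂fin)
      intro x hx
      simp only [Set.mem_setOf_eq, Set.mem_union] at hx ⊢
      by_cases hx1 : x ∈ V₁
      · left; rwa [hτval1 x hx1] at hx
      · right; rwa [hτval2 x hx1] at hx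
    refine ⟨τ, hτfin, fun x => ?_⟩
    by_cases hx1 : x ∈ V₁
    · rw [hθ1 x hx1, show subst τ (θ₁ x) = subst τ₁ (θ₁ x) from
        subst_congr fun y hy => hτval1 y (h1rel x hx1 y hy)]
      exact hτ₁ x
    · rw [hθ2 x hx1]
      by_cases hx2 : x ∈ V₂
      · rw [show subst τ (θ₂ x) = subst τ₂ (θ₂ x) from
          subst_congr fun y hy => hτval2 y (fun hy1 => hdis y hy1 (h2rel x hx2 y hy))]
        exact hτ₂ x
      · rw [h2id x hx2, subst_var, hτval2 x hx1]
        have := hτ₂ x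
        rwa [h2id x hx2, subst_var] at this

theorem tvars_subst_sub {θ₁ : ℕ → Tm} {V₁ : Set ℕ}
    (hrel : ∀ x ∈ V₁, ∀ y ∈ varsL (θ₁ x), y ∈ V₁) {r : Tm} (hr : tvars r ⊆ V₁) :
    tvars (subst θ₁ r) ⊆ V₁ := by
  intro y hy
  obtain ⟨x, hx, hyx⟩ := mem_varsL_subst.1 hy
  exact hrel x (hr hx) y hyx

theorem tensor_functorial' :
    (∀ f f₂ g g₂ h h₂ : UFlow, FlowEquiv f f₂ → FlowEquiv g g₂ →
      IsTensor f g h → IsTensor f₂ g₂ h₂ → FlowEquiv h h₂) ∧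
    (∀ f g f' g' a b c p q d : UFlow,
      IsFlow f → IsFlow g → IsFlow f' → IsFlow g' →
      IsTensor f g a → IsTensor f' g' b → IsProd a b c →
      IsProd f f' p → IsProd g g' q → IsTensor p q d →
      FlowEquiv c d) := by
  constructor
  · exact fun f f₂ g g₂ h h₂ hf hg ht ht₂ => tensor_unique hf hg ht ht₂
  intro f g f' g' a b c p q d _ _ _ _ hta htb hab hp hq htd
  classical
  -- pairwise variable-disjoint representatives F1 ~ f, F2 ~ f', F3 ~ g, F4 ~ g'
  obtain ⟨F1, hF1, -⟩ := fresh_rename f ∅ Set.finite_empty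
  obtain ⟨F2, hF2, hF2d⟩ := fresh_rename f' (flowVars F1) (flowVars_finite F1)
  obtain ⟨F3, hF3, hF3d⟩ := fresh_rename g (flowVars F1 ∪ flowVars F2)
    ((flowVars_finite F1).union (flowVars_finite F2))
  obtain ⟨F4, hF4, hF4d⟩ := fresh_rename g' (flowVars F1 ∪ flowVars F2 ∪ flowVars F3)
    (((flowVars_finite F1).union (flowVars_finite F2)).union (flowVars_finite F3))
  have e2 : ∀ x ∈ flowVars F2, x ∈ flowVars F1 → False := fun x h1 h2 =>
    Set.eq_empty_iff_forall_notMem.1 hF2d x ⟨h1, h2⟩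
  have e3 : ∀ x ∈ flowVars F3, x ∈ flowVars F1 ∪ flowVars F2 → False := fun x h1 h2 =>
    Set.eq_empty_iff_forall_notMem.1 hF3d x ⟨h1, h2⟩
  have e4 : ∀ x ∈ flowVars F4, x ∈ flowVars F1 ∪ flowVars F2 ∪ flowVars F3 → False :=
    fun x h1 h2 => Set.eq_empty_iff_forall_notMem.1 hF4d x ⟨h1, h2⟩
  set V₁ : Set ℕ := flowVars F1 ∪ flowVars F2 with hV₁
  set V₂ : Set ℕ := flowVars F3 ∪ flowVars F4 with hV₂
  have d12 : flowVars F1 ∩ flowVars F2 = ∅ :=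
    Set.eq_empty_iff_forall_notMem.2 fun x ⟨h1, h2⟩ => e2 x h2 h1
  have d34 : flowVars F3 ∩ flowVars F4 = ∅ :=
    Set.eq_empty_iff_forall_notMem.2 fun x ⟨h1, h2⟩ => e4 x h2 (Or.inr h1)
  have d13 : flowVars F1 ∩ flowVars F3 = ∅ :=
    Set.eq_empty_iff_forall_notMem.2 fun x ⟨h1, h2⟩ => e3 x h2 (Or.inl h1)
  have d24 : flowVars F2 ∩ flowVars F4 = ∅ :=
    Set.eq_empty_iff_forall_notMem.2 fun x ⟨h1, h2⟩ => e4 x h2 (Or.inl (Or.inr h1))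
  have dV : V₁ ∩ V₂ = ∅ := by
    rw [hV₁, hV₂, Set.eq_empty_iff_forall_notMem]
    rintro x ⟨h1, h2 | h2⟩
    · exact e3 x h2 h1
    · exact e4 x h2 (Or.inl h1)
  -- an mgu for the f-side, relevant to V₁
  obtain ⟨P1, P2, θp, hfP1, hf'P2, hdisjP, hmguP, -⟩ := id hp
  obtain ⟨πp, hπpfin, hp1, hp2, hp3, hp4⟩ := joint_rename hdisjP d12
    (flowEquiv_trans (flowEquiv_symm hfP1) hF1) (flowEquiv_trans (flowEquiv_symm hf'P2) hF2)
  have hmgu1raw : IsMGU (fun x => θp (πp.symm x)) F1.2 F2.1 := by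
    have h0 := isMGU_rename hmguP hπpfin
    rwa [hp2, hp3] at h0
  obtain ⟨θ₁, hθ₁mgu, hθ₁id, hθ₁rel⟩ := exists_relevant_mgu hmgu1raw
  have hsmall1 : tvars F1.2 ∪ tvars F2.1 ⊆ V₁ := by
    rintro x (hx | hx)
    · exact Or.inl (Or.inr hx)
    · exact Or.inr (Or.inl hx)
  have h1id : ∀ x ∉ V₁, θ₁ x = .var x := fun x hx => hθ₁id x fun h => hx (hsmall1 h)
  have h1rel : ∀ x ∈ V₁, ∀ y ∈ varsL (θ₁ x), y ∈ V₁ := by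
    intro x hx y hy
    by_cases hxs : x ∈ tvars F1.2 ∪ tvars F2.1
    · exact hsmall1 (hθ₁rel x hxs y hy)
    · rw [hθ₁id x hxs] at hy; simp at hy; exact hy ▸ hx
  -- an mgu for the g-side, relevant to V₂
  obtain ⟨Q1, Q2, θq, hgQ1, hg'Q2, hdisjQ, hmguQ, -⟩ := id hq
  obtain ⟨πq, hπqfin, hq1, hq2, hq3, hq4⟩ := joint_rename hdisjQ d34
    (flowEquiv_trans (flowEquiv_symm hgQ1) hF3) (flowEquiv_trans (flowEquiv_symm hg'Q2) hF4)
  have hmgu2raw : IsMGU (fun x => θq (πq.symm x)) F3.2 F4.1 := by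
    have h0 := isMGU_rename hmguQ hπqfin
    rwa [hq2, hq3] at h0
  obtain ⟨θ₂, hθ₂mgu, hθ₂id, hθ₂rel⟩ := exists_relevant_mgu hmgu2raw
  have hsmall2 : tvars F3.2 ∪ tvars F4.1 ⊆ V₂ := by
    rintro x (hx | hx)
    · exact Or.inl (Or.inr hx)
    · exact Or.inr (Or.inl hx)
  have h2id : ∀ x ∉ V₂, θ₂ x = .var x := fun x hx => hθ₂id x fun h => hx (hsmall2 h)
  have h2rel : ∀ x ∈ V₂, ∀ y ∈ varsL (θ₂ x), y ∈ V₂ := by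
    intro x hx y hy
    by_cases hxs : x ∈ tvars F3.2 ∪ tvars F4.1
    · exact hsmall2 (hθ₂rel x hxs y hy)
    · rw [hθ₂id x hxs] at hy; simp at hy; exact hy ▸ hx
  -- the combined substitution
  set θ : ℕ → Tm := fun x => if x ∈ V₁ then θ₁ x else θ₂ x with hθdef
  have hθ1 : ∀ x ∈ V₁, θ x = θ₁ x := fun x hx => by rw [hθdef]; simp [if_pos hx]
  have hθ2 : ∀ x ∉ V₁, θ x = θ₂ x := fun x hx => by rw [hθdef]; simp [if_neg hx]
  have hmguθ : IsMGU θ (bu F1.2 F3.2) (bu F2.1 F4.1) :=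
    combine_mgu dV (fun x hx => Or.inl (Or.inr hx)) (fun x hx => Or.inr (Or.inl hx))
      (fun x hx => Or.inl (Or.inr hx)) (fun x hx => Or.inr (Or.inl hx))
      hθ₁mgu hθ₂mgu h1rel h2id h2rel hθ1 hθ2
  -- the canonical products and tensors
  set p₀ : UFlow := (subst θ₁ F1.1, subst θ₁ F2.2) with hp₀def
  have hp₀ : IsProd f f' p₀ := ⟨F1, F2, θ₁, hF1, hF2, d12, hθ₁mgu, rfl⟩
  have hppeq : FlowEquiv p p₀ := prod_unique hp hp₀
  set q₀ : UFlow := (subst θ₂ F3.1, subst θ₂ F4.2) with hq₀def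
  have hq₀ : IsProd g g' q₀ := ⟨F3, F4, θ₂, hF3, hF4, d34, hθ₂mgu, rfl⟩
  have hqqeq : FlowEquiv q q₀ := prod_unique hq hq₀
  set a₀ : UFlow := (bu F1.1 F3.1, bu F1.2 F3.2) with ha₀def
  have ha₀ : IsTensor f g a₀ := ⟨F1, F3, hF1, hF3, d13, rfl⟩
  have haaeq : FlowEquiv a a₀ := tensor_unique (flowEquiv_refl f) (flowEquiv_refl g) hta ha₀
  set b₀ : UFlow := (bu F2.1 F4.1, bu F2.2 F4.2) with hb₀def
  have hb₀ : IsTensor f' g' b₀ := ⟨F2, F4, hF2, hF4, d24, rfl⟩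
  have hbbeq : FlowEquiv b b₀ := tensor_unique (flowEquiv_refl f') (flowEquiv_refl g') htb hb₀
  -- variables of bu-flows
  have tvars_bu : ∀ s t : Tm, tvars (bu s t) ⊆ tvars s ∪ tvars t := by
    intro s t x hx
    simp only [tvars, bu, Set.mem_setOf_eq, varsL_app, List.mem_flatMap] at hx
    obtain ⟨u, hu, hxu⟩ := hx
    simp only [List.mem_cons, List.not_mem_nil, or_false] at hu
    rcases hu with rfl | rfl
    · exact Or.inl hxu
    · exact Or.inr hxu
  have dab : flowVars a₀ ∩ flowVars b₀ = ∅ := by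
    rw [Set.eq_empty_iff_forall_notMem]
    rintro x ⟨hx1, hx2⟩
    have hxa : x ∈ tvars F1.1 ∪ tvars F3.1 ∪ (tvars F1.2 ∪ tvars F3.2) := by
      rcases hx1 with hx | hx
      · exact Or.inl (tvars_bu _ _ hx)
      · exact Or.inr (tvars_bu _ _ hx)
    have hxb : x ∈ tvars F2.1 ∪ tvars F4.1 ∪ (tvars F2.2 ∪ tvars F4.2) := by
      rcases hx2 with hx | hx
      · exact Or.inl (tvars_bu _ _ hx)
      · exact Or.inr (tvars_bu _ _ hx)
    have hxa' : x ∈ flowVars F1 ∪ flowVars F3 := by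
      rcases hxa with (hx | hx) | (hx | hx)
      · exact Or.inl (Or.inl hx)
      · exact Or.inr (Or.inl hx)
      · exact Or.inl (Or.inr hx)
      · exact Or.inr (Or.inr hx)
    have hxb' : x ∈ flowVars F2 ∪ flowVars F4 := by
      rcases hxb with (hx | hx) | (hx | hx)
      · exact Or.inl (Or.inl hx)
      · exact Or.inr (Or.inl hx)
      · exact Or.inl (Or.inr hx)
      · exact Or.inr (Or.inr hx)
    rcases hxa' with hx | hx <;> rcases hxb' with hy | hy
    · exact e2 x hy hx
    · exact e4 x hy (Or.inl (Or.inl hx))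
    · exact e3 x hx (Or.inr hy)
    · exact e4 x hy (Or.inr hx)
  -- the product of the tensors
  set c₀ : UFlow := (subst θ a₀.1, subst θ b₀.2) with hc₀def
  have hc₀ : IsProd a b c₀ := ⟨a₀, b₀, θ, haaeq, hbbeq, dab, hmguθ, rfl⟩
  have hcceq : FlowEquiv c c₀ := prod_unique hab hc₀
  -- c₀ is a tensor of p₀ and q₀
  have hsubV1 : ∀ {r : Tm}, tvars r ⊆ V₁ → subst θ r = subst θ₁ r := fun hr =>
    subst_congr fun x hx => hθ1 x (hr hx)
  have hsubV2 : ∀ {r : Tm}, tvars r ⊆ V₂ → subst θ r = subst θ₂ r := fun hr =>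
    subst_congr fun x hx => hθ2 x fun hx1 =>
      Set.eq_empty_iff_forall_notMem.1 dV x ⟨hx1, hr hx⟩
  have hc₀shape : c₀ = (bu p₀.1 q₀.1, bu p₀.2 q₀.2) := by
    rw [hc₀def, ha₀def, hb₀def, hp₀def, hq₀def]
    show (subst θ (bu F1.1 F3.1), subst θ (bu F2.2 F4.2)) = _
    rw [subst_bu, subst_bu,
      hsubV1 (fun x hx => Or.inl (Or.inl hx)),
      hsubV2 (fun x hx => Or.inl (Or.inl hx)),
      hsubV1 (fun x hx => Or.inr (Or.inr hx)),
      hsubV2 (fun x hx => Or.inr (Or.inr hx))]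
  have dpq : flowVars p₀ ∩ flowVars q₀ = ∅ := by
    rw [Set.eq_empty_iff_forall_notMem]
    rintro x ⟨hx1, hx2⟩
    have hx1' : x ∈ V₁ := by
      rcases hx1 with hx | hx
      · exact tvars_subst_sub h1rel (fun y hy => Or.inl (Or.inl hy)) hx
      · exact tvars_subst_sub h1rel (fun y hy => Or.inr (Or.inr hy)) hx
    have hx2' : x ∈ V₂ := by
      rcases hx2 with hx | hx
      · exact tvars_subst_sub h2rel (fun y hy => Or.inl (Or.inl hy)) hx
      · exact tvars_subst_sub h2rel (fun y hy => Or.inr (Or.inr hy)) hx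
    exact Set.eq_empty_iff_forall_notMem.1 dV x ⟨hx1', hx2'⟩
  have htpq : IsTensor p₀ q₀ c₀ :=
    ⟨p₀, q₀, flowEquiv_refl p₀, flowEquiv_refl q₀, dpq, hc₀shape⟩
  have hdeq : FlowEquiv d c₀ := tensor_unique hppeq hqqeq htd htpq
  exact flowEquiv_trans hcceq (flowEquiv_symm hdeq)

/-- the tensor product of flows is well-defined on renaming classes,
and is functorial with respect to the product:
`(f ⊗ g)(f' ⊗ g') = (ff') ⊗ (gg')` whenever both sides are defined. -/
theorem tensor_functorial :
    (∀ f f₂ g g₂ h h₂ : UFlow, FlowEquiv f f₂ → FlowEquiv g g₂ →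
      IsTensor f g h → IsTensor f₂ g₂ h₂ → FlowEquiv h h₂) ∧
    (∀ f g f' g' a b c p q d : UFlow,
      IsFlow f → IsFlow g → IsFlow f' → IsFlow g' →
      IsTensor f g a → IsTensor f' g' b → IsProd a b c →
      IsProd f f' p → IsProd g g' q → IsTensor p q d →
      FlowEquiv c d) := tensor_functorial'
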